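/- If A ∈ 2^ω is Martin-Löf random, then the many-one degree of A contains an infinite antichain of 1-degrees: there is a family (B_i)_{i∈ω} of subsets of ω with B_i ≡_m A for all i and B_i ≰_1 B_j for all i ≠ j. -/

import Mathlib

open MeasureTheory

/-- The cylinder of binary sequences extending the finite string `σ`. -/
def cylinder (σ : List Bool) : Set (ℕ → Bool) :=
  {X | ∀ i, i < σ.length → X i = σ.getD i false}

/-- `μ` is the fair-coin product measure on Cantor space:
each cylinder `[σ]` has measure `2^{-|σ|}`. -/
def IsFairCoin (μ : Measure (ℕ → Bool)) : Prop :=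
  ∀ σ : List Bool, μ (cylinder σ) = (1 / 2 : ENNReal) ^ σ.length

/-! ### Arithmetic: block sizes, block starts, block index -/

def sB (i n : ℕ) : ℕ := if n % (i+2) = 0 then i + 2 else 1

def startB (i : ℕ) : ℕ → ℕ
  | 0 => 0
  | n+1 => startB i n + sB i n

def blkAux (i m : ℕ) : ℕ → ℕ
  | 0 => 0
  | j+1 => if startB i (j+1) ≤ m then j+1 else blkAux i m j

def blkB (i m : ℕ) : ℕ := blkAux i m m

lemma one_le_sB (i n : ℕ) : 1 ≤ sB i n := by
  unfold sB; split <;> omega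

lemma sB_le (i n : ℕ) : sB i n ≤ i + 2 := by
  unfold sB; split <;> omega

lemma startB_lt_succ (i n : ℕ) : startB i n < startB i (n+1) := by
  have := one_le_sB i n
  show startB i n < startB i n + sB i n
  omega

lemma startB_mono (i : ℕ) : StrictMono (startB i) :=
  strictMono_nat_of_lt_succ (startB_lt_succ i)

lemma le_startB (i n : ℕ) : n ≤ startB i n := by
  induction n with
  | zero => exact Nat.zero_le _
  | succ n ih =>
    have := one_le_sB i n
    show n + 1 ≤ startB i n + sB i n
    omega

lemma blkAux_le (i m : ℕ) : ∀ j, blkAux i m j ≤ j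
  | 0 => le_refl 0
  | j+1 => by
    unfold blkAux; split
    · exact le_refl _
    · exact (blkAux_le i m j).trans (Nat.le_succ j)

lemma blkAux_start (i m : ℕ) : ∀ j, startB i (blkAux i m j) ≤ m
  | 0 => by simp [blkAux, startB]
  | j+1 => by
    unfold blkAux; split
    · assumption
    · exact blkAux_start i m j

lemma blkAux_max (i m : ℕ) : ∀ j, ∀ k ≤ j, startB i k ≤ m → k ≤ blkAux i m j
  | 0, k, hk, _ => by omega
  | j+1, k, hk, hs => by
    unfold blkAux; split
    · exact hk
    · rename_i hns
      rcases Nat.lt_succ_iff_lt_or_eq.mp (Nat.lt_succ_of_le hk) with h | h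
      · exact blkAux_max i m j k (by omega) hs
      · exact absurd (h ▸ hs) hns

lemma startB_le_blkB (i m : ℕ) : startB i (blkB i m) ≤ m := blkAux_start i m m

lemma lt_startB_blkB_succ (i m : ℕ) : m < startB i (blkB i m + 1) := by
  by_contra h
  push_neg at h
  have h1 : blkB i m + 1 ≤ m := le_trans (le_startB i _) h
  have h2 : blkB i m + 1 ≤ blkB i m := blkAux_max i m m (blkB i m + 1) h1 h
  omega

lemma blkB_eq_of (i : ℕ) {n m : ℕ} (h1 : startB i n ≤ m) (h2 : m < startB i (n+1)) :
    blkB i m = n := by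
  have a1 := startB_le_blkB i m
  have a2 := lt_startB_blkB_succ i m
  rcases lt_trichotomy (blkB i m) n with h | h | h
  · have : startB i (blkB i m + 1) ≤ startB i n := (startB_mono i).monotone (by omega)
    omega
  · exact h
  · have : startB i (n + 1) ≤ startB i (blkB i m) := (startB_mono i).monotone (by omega)
    omega

lemma blkB_startB_add (i : ℕ) {n r : ℕ} (hr : r < sB i n) : blkB i (startB i n + r) = n := by
  refine blkB_eq_of i (Nat.le_add_right _ _) ?_
  show startB i n + r < startB i n + sB i n
  omega

lemma blkB_startB (i n : ℕ) : blkB i (startB i n) = n := by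
  have := blkB_startB_add i (n := n) (r := 0) (one_le_sB i n)
  simpa using this

lemma blkB_mem (j : ℕ) {x n : ℕ} (h : blkB j x = n) :
    startB j n ≤ x ∧ x < startB j n + sB j n := by
  have a1 := startB_le_blkB j x
  have a2 := lt_startB_blkB_succ j x
  rw [h] at a1 a2
  exact ⟨a1, by simpa [startB] using a2⟩

/-! ### Primrec facts -/

lemma primrec_sB (i : ℕ) : Primrec (sB i) := by
  have hp : PrimrecPred fun n : ℕ => n % (i+2) = 0 :=
    Primrec.eq.comp (Primrec.nat_mod.comp Primrec.id (Primrec.const (i+2))) (Primrec.const 0)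
  exact Primrec.ite hp (Primrec.const (i+2)) (Primrec.const 1)

lemma primrec_startB (i : ℕ) : Primrec (startB i) := by
  have hh : Primrec fun p : ℕ × (ℕ × ℕ) => p.2.2 + sB i p.2.1 :=
    Primrec.nat_add.comp (Primrec.snd.comp Primrec.snd)
      ((primrec_sB i).comp (Primrec.fst.comp Primrec.snd))
  refine (Primrec.nat_rec' Primrec.id (Primrec.const 0) hh.to₂).of_eq fun n => ?_
  show Nat.rec (motive := fun _ => ℕ) 0 (fun y IH => IH + sB i y) n = startB i n
  induction n with
  | zero => rfl
  | succ n ih =>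
    show (Nat.rec (motive := fun _ => ℕ) 0 (fun y IH => IH + sB i y) n) + sB i n = _
    rw [ih]; rfl

lemma primrec_blkB (i : ℕ) : Primrec (blkB i) := by
  have hh : Primrec fun p : ℕ × (ℕ × ℕ) =>
      if startB i (p.2.1+1) ≤ p.1 then p.2.1+1 else p.2.2 := by
    refine Primrec.ite ?_ (Primrec.succ.comp (Primrec.fst.comp Primrec.snd))
      (Primrec.snd.comp Primrec.snd)
    exact Primrec.nat_le.comp
      ((primrec_startB i).comp (Primrec.succ.comp (Primrec.fst.comp Primrec.snd)))
      Primrec.fst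
  refine (Primrec.nat_rec' Primrec.id (Primrec.const 0) hh.to₂).of_eq fun m => ?_
  show Nat.rec (motive := fun _ => ℕ) 0
      (fun j IH => if startB i (j+1) ≤ m then j+1 else IH) m = blkAux i m m
  have key : ∀ j, Nat.rec (motive := fun _ => ℕ) 0
      (fun j IH => if startB i (j+1) ≤ m then j+1 else IH) j = blkAux i m j := by
    intro j
    induction j with
    | zero => rfl
    | succ j ih => simp only [blkAux, ← ih]
  exact key m

/-! ### Computability helpers -/

theorem computable_nat_find {α : Type*} [Primcodable α] {p : α → ℕ → Bool}
    (hp : Computable₂ p) (H : ∀ a, ∃ n, p a n = true) :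
    Computable fun a => Nat.find (H a) := by
  have h1 : Partrec fun a => Nat.rfind fun n => (p a n : Part Bool) :=
    Partrec.rfind hp.partrec₂
  refine h1.of_eq_tot fun a => ?_
  refine Nat.mem_rfind.mpr ?_
  constructor
  · exact Part.mem_some_iff.mpr (Nat.find_spec (H a)).symm
  · intro m hm
    refine Part.mem_some_iff.mpr ?_
    have := Nat.find_min (H a) hm
    simpa using Ne.symm this

def listAllB (p : ℕ → ℕ → Bool) (l : List ℕ) (n : ℕ) : Bool :=
  Nat.rec true (fun t acc => acc && p (l.getD t 0) n) l.length

lemma listAllB_aux (p : ℕ → ℕ → Bool) (l : List ℕ) (n : ℕ) :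
    ∀ k, (Nat.rec (motive := fun _ => Bool) true
      (fun t acc => acc && p (l.getD t 0) n) k = true) ↔ ∀ t < k, p (l.getD t 0) n = true := by
  intro k
  induction k with
  | zero => simp
  | succ k ih =>
    show (Nat.rec (motive := fun _ => Bool) true _ k && _) = true ↔ _
    rw [Bool.and_eq_true, ih]
    constructor
    · rintro ⟨h1, h2⟩ t ht
      rcases Nat.lt_succ_iff_lt_or_eq.mp ht with h | h
      · exact h1 t h
      · exact h ▸ h2
    · intro h
      exact ⟨fun t ht => h t (ht.trans (Nat.lt_succ_self k)), h k (Nat.lt_succ_self k)⟩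

lemma listAllB_iff (p : ℕ → ℕ → Bool) (l : List ℕ) (n : ℕ) :
    listAllB p l n = true ↔ ∀ m ∈ l, p m n = true := by
  rw [listAllB, listAllB_aux]
  constructor
  · intro h m hm
    obtain ⟨t, ht, rfl⟩ := List.mem_iff_getElem.mp hm
    have := h t ht
    rwa [List.getD_eq_getElem l 0 ht] at this
  · intro h t ht
    rw [List.getD_eq_getElem l 0 ht]
    exact h _ (List.getElem_mem _)

lemma computable_listAllB {p : ℕ → ℕ → Bool} (hp : Computable₂ p) :
    Computable fun q : List ℕ × ℕ => listAllB p q.1 q.2 := by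
  have hgetD : Computable₂ fun (l : List ℕ) (t : ℕ) => l.getD t 0 :=
    (Primrec.list_getD 0).to_comp
  have hh : Computable fun q : (List ℕ × ℕ) × (ℕ × Bool) =>
      (q.2.2 && p (q.1.1.getD q.2.1 0) q.1.2) :=
    Primrec.and.to_comp.comp (Computable.snd.comp Computable.snd)
      (hp.comp (hgetD.comp (Computable.fst.comp Computable.fst)
        (Computable.fst.comp Computable.snd)) (Computable.snd.comp Computable.fst))
  exact (Computable.nat_rec (Computable.list_length.comp Computable.fst)
    (Computable.const true) hh.to₂ :)

/-! ### Measure of agreement events -/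

theorem measure_agree_le
    (μ : Measure (ℕ → Bool)) (hμ : IsFairCoin μ) (c L : ℕ) (a b : ℕ → ℕ)
    (haL : ∀ t, t < c → a t < L) (hbL : ∀ t, t < c → b t < L)
    (hainj : ∀ t u, t < c → u < c → a t = a u → t = u)
    (hba : ∀ t u, t < c → u < c → b t ≠ a u) :
    μ {X : ℕ → Bool | ∀ t, t < c → X (a t) = X (b t)} ≤ (1 / 2 : ENNReal) ^ c := by
  classical
  have hcL : c ≤ L := by
    have : Function.Injective (fun t : Fin c => (⟨a t.1, haL t.1 t.2⟩ : Fin L)) := by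
      intro t u h
      exact Fin.ext (hainj t.1 u.1 t.2 u.2 (congrArg Fin.val h))
    simpa using Fintype.card_le_of_injective _ this
  set Sat : Finset (Fin L → Bool) :=
    Finset.univ.filter (fun v => ∀ t, ∀ ht : t < c, v ⟨a t, haL t ht⟩ = v ⟨b t, hbL t ht⟩)
    with hSat
  have hsub : {X : ℕ → Bool | ∀ t, t < c → X (a t) = X (b t)} ⊆
      ⋃ v ∈ Sat, cylinder (List.ofFn v) := by
    intro X hX
    have hv : (fun idx : Fin L => X idx.1) ∈ Sat := by
      rw [hSat, Finset.mem_filter]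
      exact ⟨Finset.mem_univ _, fun t ht => hX t ht⟩
    have hcyl : X ∈ cylinder (List.ofFn fun idx : Fin L => X idx.1) := by
      intro idx hidx
      rw [List.length_ofFn] at hidx
      rw [List.getD_eq_getElem _ _ (by simpa using hidx), List.getElem_ofFn]
    exact Set.mem_biUnion hv hcyl
  -- counting
  have hcount : Sat.card ≤ 2 ^ (L - c) := by
    set aset : Finset ℕ := (Finset.range c).image a with haset
    have hmem : ∀ t, t < c → a t ∈ aset := fun t ht =>
      Finset.mem_image.mpr ⟨t, Finset.mem_range.mpr ht, rfl⟩
    set T := {y : Fin L // y.1 ∉ aset}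
    have hinj : Set.InjOn (fun (v : Fin L → Bool) (y : T) => v y.1) Sat := by
      intro v hv w hw h
      rw [hSat, Finset.mem_coe, Finset.mem_filter] at hv hw
      funext x
      by_cases hx : x.1 ∈ aset
      · obtain ⟨t, ht, hat⟩ := Finset.mem_image.mp hx
        rw [Finset.mem_range] at ht
        have hxa : x = ⟨a t, haL t ht⟩ := Fin.ext hat.symm
        have hbt : (⟨b t, hbL t ht⟩ : Fin L).1 ∉ aset := by
          intro hc
          obtain ⟨u, hu, hbu⟩ := Finset.mem_image.mp hc
          exact hba t u ht (Finset.mem_range.mp hu) hbu.symm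
        have h1 := congrFun h (⟨⟨b t, hbL t ht⟩, hbt⟩ : T)
        rw [hxa, hv.2 t ht, hw.2 t ht]
        exact h1
      · exact congrFun h (⟨x, hx⟩ : T)
    have h1 : Sat.card ≤ Fintype.card (T → Bool) := by
      have := Finset.card_le_card_of_injOn (fun (v : Fin L → Bool) (y : T) => v y.1)
        (fun v _ => Finset.mem_univ _) hinj
      simpa [Finset.card_univ] using this
    have h2 : Fintype.card (T → Bool) = 2 ^ Fintype.card T := by
      simp [Fintype.card_fun]
    have h3 : Fintype.card T ≤ L - c := by
      have hc2 : c ≤ Fintype.card {y : Fin L // y.1 ∈ aset} := by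
        have : Function.Injective
            (fun t : Fin c => (⟨⟨a t.1, haL t.1 t.2⟩, hmem t.1 t.2⟩ :
              {y : Fin L // y.1 ∈ aset})) := by
          intro t u h
          exact Fin.ext (hainj t.1 u.1 t.2 u.2 (congrArg (fun z => z.1.1) h))
        simpa using Fintype.card_le_of_injective _ this
      calc Fintype.card T
          = Fintype.card (Fin L) - Fintype.card {y : Fin L // y.1 ∈ aset} :=
            Fintype.card_subtype_compl _
        _ ≤ L - c := by rw [Fintype.card_fin]; omega
    calc Sat.card ≤ 2 ^ Fintype.card T := h2 ▸ h1
      _ ≤ 2 ^ (L - c) := Nat.pow_le_pow_right (by norm_num) h3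
  calc μ {X : ℕ → Bool | ∀ t, t < c → X (a t) = X (b t)}
      ≤ μ (⋃ v ∈ Sat, cylinder (List.ofFn v)) := measure_mono hsub
    _ ≤ ∑ v ∈ Sat, μ (cylinder (List.ofFn v)) := measure_biUnion_finset_le Sat _
    _ = ∑ v ∈ Sat, (1 / 2 : ENNReal) ^ L := by
        refine Finset.sum_congr rfl fun v _ => ?_
        rw [hμ (List.ofFn v), List.length_ofFn]
    _ = (Sat.card : ENNReal) * (1 / 2 : ENNReal) ^ L := by
        rw [Finset.sum_const, nsmul_eq_mul]
    _ ≤ (2 : ENNReal) ^ (L - c) * (1 / 2 : ENNReal) ^ L := by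
        apply mul_le_mul_left
        have : ((2 : ℕ) ^ (L - c) : ENNReal) = (2 : ENNReal) ^ (L - c) := by push_cast; ring
        rw [← this]
        exact_mod_cast Nat.cast_le.mpr hcount
    _ = (1 / 2 : ENNReal) ^ c := by
        set k := L - c with hk
        rw [show L = k + c by omega, pow_add, ← mul_assoc, ← mul_pow]
        have h2 : (2 : ENNReal) * (1 / 2) = 1 := by
          rw [one_div]
          exact ENNReal.mul_inv_cancel (by norm_num) (by norm_num)
        rw [h2, one_pow, one_mul]

/-- `(U n)` is a Martin-Löf test w.r.t. `μ`: a uniformly c.e. sequence of open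
sets (each `U n` is the union of the cylinders over a uniformly c.e. set of
strings) with `μ (U n) ≤ 2^{-n}`. -/
def MLTest (μ : Measure (ℕ → Bool)) (U : ℕ → Set (ℕ → Bool)) : Prop :=
  (∃ W : ℕ → List Bool → Prop,
      REPred (fun p : ℕ × List Bool => W p.1 p.2) ∧
      ∀ n, U n = ⋃ σ ∈ {σ | W n σ}, cylinder σ) ∧
  ∀ n, μ (U n) ≤ (1 / 2 : ENNReal) ^ n

/-- `A` is Martin-Löf random (w.r.t. `μ`) if it avoids every Martin-Löf test. -/
def MLRandom (μ : Measure (ℕ → Bool)) (A : ℕ → Bool) : Prop :=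
  ∀ U : ℕ → Set (ℕ → Bool), MLTest μ U → A ∉ ⋂ n, U n

/-! ### Building a test from a greedy sequence -/

section Master

variable (C : List ℕ → ℕ → Bool) (hex : ∀ l, ∃ n, C l n = true) (b : ℕ → ℕ)

def nextL (l : List ℕ) : ℕ := Nat.find (hex l)

def prefL : ℕ → List ℕ
  | 0 => []
  | t+1 => prefL t ++ [nextL C hex (prefL t)]

def seqL (t : ℕ) : ℕ := nextL C hex (prefL C hex t)

def ML : ℕ → ℕ
  | 0 => 0
  | c+1 => max (ML c) (max (seqL C hex c) (b (seqL C hex c)) + 1)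

def WL (c : ℕ) (σ : List Bool) : Prop :=
  σ.length = ML C hex b c ∧
    ∀ t, t < c → σ.getD (seqL C hex t) false = σ.getD (b (seqL C hex t)) false

def allTB (c : ℕ) (σ : List Bool) : Bool :=
  Nat.rec true (fun t acc => acc &&
    decide (σ.getD (seqL C hex t) false = σ.getD (b (seqL C hex t)) false)) c

variable {C} {b}

lemma C_seqL (t : ℕ) : C (prefL C hex t) (seqL C hex t) = true :=
  Nat.find_spec (hex (prefL C hex t))

lemma mem_prefL {m t : ℕ} : m ∈ prefL C hex t ↔ ∃ u, u < t ∧ seqL C hex u = m := by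
  induction t with
  | zero => simp [prefL]
  | succ t ih =>
    show m ∈ prefL C hex t ++ [nextL C hex (prefL C hex t)] ↔ _
    rw [List.mem_append, List.mem_singleton, ih]
    constructor
    · rintro (⟨u, hu, rfl⟩ | rfl)
      · exact ⟨u, by omega, rfl⟩
      · exact ⟨t, by omega, rfl⟩
    · rintro ⟨u, hu, rfl⟩
      rcases Nat.lt_succ_iff_lt_or_eq.mp hu with h | h
      · exact Or.inl ⟨u, h, rfl⟩
      · exact Or.inr (by rw [h]; rfl)

variable (hC : Computable fun q : List ℕ × ℕ => C q.1 q.2) (hb : Computable b)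
variable (hprot : ∀ l n m, C l n = true → m ∈ l → (∃ l', C l' m = true) →
    m < n ∧ b n ≠ m ∧ b m ≠ n)
variable (hbn : ∀ l n, C l n = true → b n ≠ n)

lemma seqL_acc (t : ℕ) : ∃ l, C l (seqL C hex t) = true := ⟨_, C_seqL hex t⟩

include hprot in
lemma seqL_lt {u t : ℕ} (h : u < t) : seqL C hex u < seqL C hex t := by
  have hm : seqL C hex u ∈ prefL C hex t := mem_prefL hex |>.mpr ⟨u, h, rfl⟩
  exact (hprot _ _ _ (C_seqL hex t) hm (seqL_acc hex u)).1

include hprot in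
lemma seqL_inj {u t : ℕ} (h : seqL C hex u = seqL C hex t) : u = t := by
  rcases lt_trichotomy u t with h' | h' | h'
  · exact absurd h (Nat.ne_of_lt (seqL_lt hex hprot h'))
  · exact h'
  · exact absurd h.symm (Nat.ne_of_lt (seqL_lt hex hprot h'))

include hprot hbn in
lemma b_seqL_ne (t u : ℕ) : b (seqL C hex u) ≠ seqL C hex t := by
  rcases lt_trichotomy t u with h | h | h
  · have hm : seqL C hex t ∈ prefL C hex u := mem_prefL hex |>.mpr ⟨t, h, rfl⟩
    exact (hprot _ _ _ (C_seqL hex u) hm (seqL_acc hex t)).2.1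
  · rw [h]; exact hbn _ _ (C_seqL hex u)
  · have hm : seqL C hex u ∈ prefL C hex t := mem_prefL hex |>.mpr ⟨u, h, rfl⟩
    exact (hprot _ _ _ (C_seqL hex t) hm (seqL_acc hex u)).2.2

lemma lt_ML {t c : ℕ} (h : t < c) :
    seqL C hex t < ML C hex b c ∧ b (seqL C hex t) < ML C hex b c := by
  induction c with
  | zero => omega
  | succ c ih =>
    have hML : ML C hex b (c+1) = max (ML C hex b c)
        (max (seqL C hex c) (b (seqL C hex c)) + 1) := rfl
    rcases Nat.lt_succ_iff_lt_or_eq.mp h with h' | h'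
    · have := ih h'
      omega
    · subst h'
      omega

include hC in
lemma computable_nextL : Computable (nextL C hex) :=
  computable_nat_find hC.to₂ hex

include hC in
lemma computable_prefL : Computable (prefL C hex) := by
  have hh : Computable fun q : ℕ × (ℕ × List ℕ) => q.2.2 ++ [nextL C hex q.2.2] :=
    Computable.list_append.comp (Computable.snd.comp Computable.snd)
      (Computable.list_cons.comp
        ((computable_nextL hex hC).comp (Computable.snd.comp Computable.snd))
        (Computable.const []))
  refine (Computable.nat_rec Computable.id (Computable.const ([] : List ℕ)) hh.to₂).of_eq
    fun t => ?_
  show Nat.rec (motive := fun _ => List ℕ) [] (fun _ IH => IH ++ [nextL C hex IH]) t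
      = prefL C hex t
  induction t with
  | zero => rfl
  | succ t ih =>
    show (Nat.rec (motive := fun _ => List ℕ) [] (fun _ IH => IH ++ [nextL C hex IH]) t)
        ++ _ = _
    rw [ih]; rfl

include hC in
lemma computable_seqL : Computable (seqL C hex) :=
  (computable_nextL hex hC).comp (computable_prefL hex hC)

include hC hb in
lemma computable_ML : Computable (ML C hex b) := by
  have hh : Computable fun q : ℕ × (ℕ × ℕ) =>
      max q.2.2 (max (seqL C hex q.2.1) (b (seqL C hex q.2.1)) + 1) :=
    Primrec.nat_max.to_comp.comp (Computable.snd.comp Computable.snd)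
      (Computable.succ.comp (Primrec.nat_max.to_comp.comp
        ((computable_seqL hex hC).comp (Computable.fst.comp Computable.snd))
        (hb.comp ((computable_seqL hex hC).comp (Computable.fst.comp Computable.snd)))))
  refine (Computable.nat_rec Computable.id (Computable.const 0) hh.to₂).of_eq fun c => ?_
  show Nat.rec (motive := fun _ => ℕ) 0
      (fun t IH => max IH (max (seqL C hex t) (b (seqL C hex t)) + 1)) c = ML C hex b c
  induction c with
  | zero => rfl
  | succ c ih =>
    show max (Nat.rec (motive := fun _ => ℕ) 0 _ c) _ = _
    rw [ih]; rfl

lemma allTB_iff (c : ℕ) (σ : List Bool) :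
    allTB C hex b c σ = true ↔
      ∀ t, t < c → σ.getD (seqL C hex t) false = σ.getD (b (seqL C hex t)) false := by
  induction c with
  | zero => simp [allTB]
  | succ c ih =>
    show (allTB C hex b c σ && _) = true ↔ _
    rw [Bool.and_eq_true, ih, decide_eq_true_iff]
    constructor
    · rintro ⟨h1, h2⟩ t ht
      rcases Nat.lt_succ_iff_lt_or_eq.mp ht with h | h
      · exact h1 t h
      · exact h ▸ h2
    · intro h
      exact ⟨fun t ht => h t (by omega), h c (by omega)⟩

include hC hb in
lemma computable_allTB : Computable fun q : ℕ × List Bool => allTB C hex b q.1 q.2 := by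
  have hgetD : Computable₂ fun (l : List Bool) (t : ℕ) => l.getD t false :=
    (Primrec.list_getD false).to_comp
  have hh : Computable fun q : (ℕ × List Bool) × (ℕ × Bool) =>
      (q.2.2 && decide ((q.1.2.getD (seqL C hex q.2.1) false)
          = (q.1.2.getD (b (seqL C hex q.2.1)) false))) := by
    refine Primrec.and.to_comp.comp (Computable.snd.comp Computable.snd) ?_
    exact (Primrec.eq (α := Bool)).decide.to_comp.comp
      (hgetD.comp (Computable.snd.comp Computable.fst)
        ((computable_seqL hex hC).comp (Computable.fst.comp Computable.snd)))
      (hgetD.comp (Computable.snd.comp Computable.fst)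
        (hb.comp ((computable_seqL hex hC).comp (Computable.fst.comp Computable.snd))))
  refine (Computable.nat_rec Computable.fst (Computable.const true) hh.to₂).of_eq
    fun q => ?_
  show Nat.rec (motive := fun _ => Bool) true _ q.1 = allTB C hex b q.1 q.2
  induction q.1 with
  | zero => rfl
  | succ c ih =>
    show (Nat.rec (motive := fun _ => Bool) true _ c && _) = _
    rw [ih]; rfl

include hC hb in
lemma computable_WL : ComputablePred fun q : ℕ × List Bool => WL C hex b q.1 q.2 := by
  rw [ComputablePred.computable_iff]
  refine ⟨fun q => decide (q.2.length = ML C hex b q.1) && allTB C hex b q.1 q.2, ?_, ?_⟩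
  · refine Primrec.and.to_comp.comp ?_ (computable_allTB hex hC hb)
    exact (Primrec.eq (α := ℕ)).decide.to_comp.comp
      (Computable.list_length.comp Computable.snd)
      ((computable_ML hex hC hb).comp Computable.fst)
  · funext q
    rw [eq_iff_iff]
    show WL C hex b q.1 q.2 ↔ (_ && _) = true
    rw [Bool.and_eq_true, decide_eq_true_iff, allTB_iff]
    exact Iff.rfl

include hC hb hprot hbn in
theorem master (μ : Measure (ℕ → Bool)) (hμ : IsFairCoin μ) (A : ℕ → Bool)
    (hA : MLRandom μ A)
    (hagr : ∀ t, A (seqL C hex t) = A (b (seqL C hex t))) : False := by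
  set U : ℕ → Set (ℕ → Bool) := fun c => ⋃ σ ∈ {σ | WL C hex b c σ}, cylinder σ with hU
  have hUE : ∀ c, U c = {X : ℕ → Bool | ∀ t, t < c →
      X (seqL C hex t) = X (b (seqL C hex t))} := by
    intro c
    apply Set.Subset.antisymm
    · intro X hX
      obtain ⟨σ, hσ, hXσ⟩ := Set.mem_iUnion₂.mp hX
      intro t ht
      have h1 := hXσ (seqL C hex t) (by rw [hσ.1]; exact (lt_ML hex ht).1)
      have h2 := hXσ (b (seqL C hex t)) (by rw [hσ.1]; exact (lt_ML hex ht).2)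
      rw [h1, h2, hσ.2 t ht]
    · intro X hX
      refine Set.mem_iUnion₂.mpr ⟨List.ofFn (fun idx : Fin (ML C hex b c) => X idx.1),
        ⟨List.length_ofFn, ?_⟩, ?_⟩
      · intro t ht
        rw [List.getD_eq_getElem _ _ (by simpa using (lt_ML hex ht).1),
          List.getD_eq_getElem _ _ (by simpa using (lt_ML hex ht).2)]
        simpa using hX t ht
      · intro idx hidx
        rw [List.length_ofFn] at hidx
        rw [List.getD_eq_getElem _ _ (by simpa using hidx), List.getElem_ofFn]
  have htest : MLTest μ U := by
    constructor
    · exact ⟨WL C hex b, (computable_WL hex hC hb).to_re, fun n => rfl⟩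
    · intro c
      rw [hUE c]
      refine measure_agree_le μ hμ c (ML C hex b c) (seqL C hex)
        (fun t => b (seqL C hex t)) (fun t ht => (lt_ML hex ht).1)
        (fun t ht => (lt_ML hex ht).2) (fun t u _ _ h => seqL_inj hex hprot h)
        (fun t u _ _ => b_seqL_ne hex hprot hbn u t)
  have hmem : A ∈ ⋂ c, U c := by
    refine Set.mem_iInter.mpr fun c => ?_
    rw [hUE c]
    exact fun t _ => hagr t
  exact hA U htest hmem

end Master

/-! ### The correlation function `g` obtained from a 1-reduction -/

lemma bool_imp_iff (x y : Bool) : (!x || y) = true ↔ (x = true → y = true) := by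
  cases x <;> cases y <;> simp

lemma le_foldr_max (l : List ℕ) : ∀ m ∈ l, m ≤ l.foldr max 0 := by
  induction l with
  | nil => simp
  | cons a l ih =>
    intro m hm
    rcases List.mem_cons.mp hm with rfl | hm
    · exact le_max_left _ _
    · exact le_trans (ih m hm) (le_max_right _ _)

def stopB (i j : ℕ) (f : ℕ → ℕ) (n r : ℕ) : Bool :=
  decide (sB i n ≤ r) || !decide (blkB j (f (startB i n + r)) = n)

lemma stopB_ex (i j : ℕ) (f : ℕ → ℕ) (n : ℕ) : ∃ r, stopB i j f n r = true :=
  ⟨sB i n, by simp [stopB]⟩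

def r0 (i j : ℕ) (f : ℕ → ℕ) (n : ℕ) : ℕ := Nat.find (stopB_ex i j f n)

def gG (i j : ℕ) (f : ℕ → ℕ) (n : ℕ) : ℕ := blkB j (f (startB i n + r0 i j f n))

lemma computable_stopB (i j : ℕ) {f : ℕ → ℕ} (hf : Computable f) :
    Computable fun q : ℕ × ℕ => stopB i j f q.1 q.2 := by
  refine Primrec.or.to_comp.comp ?_ ?_
  · exact (Primrec.nat_le.comp ((primrec_sB i).comp Primrec.fst) Primrec.snd).decide.to_comp
  · refine Primrec.not.to_comp.comp ?_
    refine (Primrec.eq (α := ℕ)).decide.to_comp.comp ?_ (Computable.fst)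
    exact (primrec_blkB j).to_comp.comp (hf.comp
      (Primrec.nat_add.to_comp.comp ((primrec_startB i).to_comp.comp Computable.fst)
        Computable.snd))

lemma computable_r0 (i j : ℕ) {f : ℕ → ℕ} (hf : Computable f) :
    Computable (r0 i j f) :=
  computable_nat_find (computable_stopB i j hf).to₂ (stopB_ex i j f)

lemma computable_gG (i j : ℕ) {f : ℕ → ℕ} (hf : Computable f) :
    Computable (gG i j f) :=
  (primrec_blkB j).to_comp.comp (hf.comp
    (Primrec.nat_add.to_comp.comp (primrec_startB i).to_comp (computable_r0 i j hf)))

lemma pigeon {i j : ℕ} {f : ℕ → ℕ} (hinj : Function.Injective f) {n : ℕ}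
    (hn : sB j n < sB i n) :
    ∃ r, r < sB i n ∧ blkB j (f (startB i n + r)) ≠ n := by
  by_contra h
  push_neg at h
  have hmaps : ∀ r ∈ Finset.range (sB i n),
      f (startB i n + r) ∈ Finset.Ico (startB j n) (startB j n + sB j n) := by
    intro r hr
    exact Finset.mem_Ico.mpr (blkB_mem j (h r (Finset.mem_range.mp hr)))
  have hinjOn : Set.InjOn (fun r => f (startB i n + r)) (Finset.range (sB i n)) := by
    intro r _ s _ hrs
    have := hinj hrs
    omega
  have := Finset.card_le_card_of_injOn _ hmaps hinjOn
  rw [Finset.card_range, Nat.card_Ico] at this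
  omega

lemma gG_spec {A : ℕ → Bool} {i j : ℕ} {f : ℕ → ℕ} (hinj : Function.Injective f)
    (heq : ∀ m, A (blkB i m) = A (blkB j (f m))) {n : ℕ} (hn : sB j n < sB i n) :
    gG i j f n ≠ n ∧ A (gG i j f n) = A n := by
  obtain ⟨r, hr, hne⟩ := pigeon hinj hn
  have hstop : stopB i j f n r = true := by
    simp only [stopB, Bool.or_eq_true, Bool.not_eq_true', decide_eq_false_iff_not]
    exact Or.inr hne
  have hle : r0 i j f n ≤ r := Nat.find_min' _ hstop
  have hr0 : r0 i j f n < sB i n := lt_of_le_of_lt hle hr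
  have h0 := Nat.find_spec (stopB_ex i j f n)
  rw [show Nat.find (stopB_ex i j f n) = r0 i j f n from rfl] at h0
  rw [stopB, Bool.or_eq_true] at h0
  have hne' : gG i j f n ≠ n := by
    rcases h0 with h0 | h0
    · rw [decide_eq_true_iff] at h0; omega
    · rw [Bool.not_eq_true', decide_eq_false_iff_not] at h0
      exact h0
  refine ⟨hne', ?_⟩
  have hh := heq (startB i n + r0 i j f n)
  rw [blkB_startB_add i hr0] at hh
  exact hh.symm

lemma Sinf {i j : ℕ} (hij : i ≠ j) (N : ℕ) : ∃ n, N ≤ n ∧ sB j n < sB i n := by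
  rcases Nat.lt_or_ge j i with h | h
  · refine ⟨(i+2) * (N+1), ?_, ?_⟩
    · have : N + 1 ≤ (i+2) * (N+1) := Nat.le_mul_of_pos_left _ (by omega)
      omega
    · have h1 : sB i ((i+2) * (N+1)) = i + 2 := by
        unfold sB
        rw [if_pos (Nat.mul_mod_right _ _)]
      have h2 : sB j ((i+2)*(N+1)) ≤ j + 2 := sB_le _ _
      omega
  · have hij' : i < j := by omega
    refine ⟨(i+2) * ((j+2) * (N+1) + 1), ?_, ?_⟩
    · have h1 : N + 1 ≤ (j+2)*(N+1) := Nat.le_mul_of_pos_left _ (by omega)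
      have h2 : (j+2)*(N+1) + 1 ≤ (i+2) * ((j+2)*(N+1) + 1) :=
        Nat.le_mul_of_pos_left _ (by omega)
      omega
    · have hdvd : sB i ((i+2) * ((j+2)*(N+1)+1)) = i+2 := by
        unfold sB
        rw [if_pos (Nat.mul_mod_right _ _)]
      have hmod : ((i+2) * ((j+2)*(N+1)+1)) % (j+2) = i + 2 := by
        have hrw : (i+2) * ((j+2)*(N+1)+1) = (j+2) * ((i+2)*(N+1)) + (i+2) := by ring
        rw [hrw, Nat.mul_add_mod, Nat.mod_eq_of_lt (by omega)]
      have h1 : sB j ((i+2) * ((j+2)*(N+1)+1)) = 1 := by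
        unfold sB
        rw [if_neg (by rw [hmod]; omega)]
      omega

/-! ### No 1-reduction between distinct padded versions -/

theorem no_oneone (μ : Measure (ℕ → Bool)) (hμ : IsFairCoin μ) (A : ℕ → Bool)
    (hA : MLRandom μ A) {i j : ℕ} {f : ℕ → ℕ} (hij : i ≠ j) (hf : Computable f)
    (hinj : Function.Injective f) (heq : ∀ m, A (blkB i m) = A (blkB j (f m))) :
    False := by
  by_cases hQ : ∃ q, ∀ N, ∃ n, N ≤ n ∧ sB j n < sB i n ∧ gG i j f n = q
  · obtain ⟨q, hq⟩ := hQ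
    set p : ℕ → ℕ → Bool := fun m n =>
      !(decide (sB j m < sB i m) && decide (gG i j f m = q)) || decide (m < n) with hp
    set C : List ℕ → ℕ → Bool := fun l n =>
      (decide (sB j n < sB i n) && decide (gG i j f n = q)) && listAllB p l n with hCdef
    have hCiff : ∀ l n, C l n = true ↔
        ((sB j n < sB i n ∧ gG i j f n = q) ∧
          ∀ m ∈ l, (sB j m < sB i m ∧ gG i j f m = q) → m < n) := by
      intro l n
      rw [hCdef]
      simp only [Bool.and_eq_true, decide_eq_true_iff, listAllB_iff, hp, bool_imp_iff]
    have hex : ∀ l, ∃ n, C l n = true := by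
      intro l
      obtain ⟨n, hn1, hn2, hn3⟩ := hq (l.foldr max 0 + 1)
      refine ⟨n, (hCiff l n).mpr ⟨⟨hn2, hn3⟩, fun m hm _ => ?_⟩⟩
      have := le_foldr_max l m hm
      omega
    have hCcomp : Computable fun z : List ℕ × ℕ => C z.1 z.2 := by
      rw [hCdef]
      refine Primrec.and.to_comp.comp ?_ ?_
      · refine Primrec.and.to_comp.comp ?_ ?_
        · exact (Primrec.nat_lt.comp ((primrec_sB j).comp Primrec.id)
            ((primrec_sB i).comp Primrec.id)).decide.to_comp.comp Computable.snd
        · exact (Primrec.eq (α := ℕ)).decide.to_comp.comp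
            ((computable_gG i j hf).comp Computable.snd) (Computable.const q)
      · refine computable_listAllB ?_
        rw [hp]
        refine Primrec.or.to_comp.comp (Primrec.not.to_comp.comp ?_) ?_
        · refine Primrec.and.to_comp.comp ?_ ?_
          · exact (Primrec.nat_lt.comp ((primrec_sB j).comp Primrec.id)
              ((primrec_sB i).comp Primrec.id)).decide.to_comp.comp Computable.fst
          · exact (Primrec.eq (α := ℕ)).decide.to_comp.comp
              ((computable_gG i j hf).comp Computable.fst) (Computable.const q)
        · exact (Primrec.nat_lt).decide.to_comp.comp Computable.fst Computable.snd
    have hprot : ∀ l n m, C l n = true → m ∈ l → (∃ l', C l' m = true) →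
        m < n ∧ (fun _ => q) n ≠ m ∧ (fun _ => q) m ≠ n := by
      intro l n m hCl hm hacc
      obtain ⟨l', hl'⟩ := hacc
      have hgm := ((hCiff l' m).mp hl').1
      have hgn := (hCiff l n).mp hCl
      have hmn : m < n := hgn.2 m hm hgm
      have h1 : q ≠ m := by
        rw [← hgm.2]
        exact (gG_spec hinj heq hgm.1).1
      have h2 : q ≠ n := by
        rw [← hgn.1.2]
        exact (gG_spec hinj heq hgn.1.1).1
      exact ⟨hmn, h1, h2⟩
    have hbn : ∀ l n, C l n = true → (fun _ => q) n ≠ n := by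
      intro l n hCl
      have hgn := ((hCiff l n).mp hCl).1
      rw [← hgn.2]
      exact (gG_spec hinj heq hgn.1).1
    refine master hex hCcomp (Computable.const q) hprot hbn μ hμ A hA ?_
    intro t
    have hgn := ((hCiff _ _).mp (C_seqL hex t)).1
    have := (gG_spec hinj heq hgn.1).2
    rw [hgn.2] at this
    exact this.symm
  · push_neg at hQ
    have hQ' : ∀ q, ∃ N, ∀ n, N ≤ n → sB j n < sB i n → gG i j f n ≠ q := hQ
    set p : ℕ → ℕ → Bool := fun m n =>
      !decide (sB j m < sB i m) ||
        (decide (m < n) && !decide (gG i j f n = m) && !decide (gG i j f m = n)) with hp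
    set C : List ℕ → ℕ → Bool := fun l n =>
      decide (sB j n < sB i n) && listAllB p l n with hCdef
    have hCiff : ∀ l n, C l n = true ↔
        (sB j n < sB i n ∧
          ∀ m ∈ l, sB j m < sB i m → m < n ∧ gG i j f n ≠ m ∧ gG i j f m ≠ n) := by
      intro l n
      rw [hCdef]
      simp only [Bool.and_eq_true, decide_eq_true_iff, listAllB_iff, hp, Bool.or_eq_true,
        Bool.not_eq_true', decide_eq_false_iff_not]
      constructor
      · rintro ⟨h1, h2⟩
        refine ⟨h1, fun m hm hsm => ?_⟩
        rcases h2 m hm with h | h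
        · exact absurd hsm h
        · exact ⟨h.1.1, h.1.2, h.2⟩
      · rintro ⟨h1, h2⟩
        refine ⟨h1, fun m hm => ?_⟩
        by_cases hsm : sB j m < sB i m
        · right
          obtain ⟨ha, hb, hc⟩ := h2 m hm hsm
          exact ⟨⟨ha, hb⟩, hc⟩
        · exact Or.inl hsm
    have hex : ∀ l, ∃ n, C l n = true := by
      intro l
      have hbound : ∃ N, ∀ n, N ≤ n → sB j n < sB i n → ∀ m ∈ l, gG i j f n ≠ m := by
        induction l with
        | nil => exact ⟨0, fun n _ _ m hm => absurd hm List.not_mem_nil⟩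
        | cons a l ih =>
          obtain ⟨N1, h1⟩ := hQ' a
          obtain ⟨N2, h2⟩ := ih
          refine ⟨max N1 N2, fun n hn hs m hm => ?_⟩
          rcases List.mem_cons.mp hm with rfl | hm
          · exact h1 n (le_trans (le_max_left _ _) hn) hs
          · exact h2 n (le_trans (le_max_right _ _) hn) hs m hm
      obtain ⟨N, hN⟩ := hbound
      set F := l.foldr (fun m acc => max (max m (gG i j f m)) acc) 0 with hF
      have hFle : ∀ m ∈ l, m ≤ F ∧ gG i j f m ≤ F := by
        rw [hF]
        clear hN hF
        induction l with
        | nil => simp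
        | cons a l ih =>
          intro m hm
          rcases List.mem_cons.mp hm with rfl | hm
          · constructor <;>
              exact le_trans (by omega) (le_max_left _ _)
          · obtain ⟨u1, u2⟩ := ih m hm
            exact ⟨le_trans u1 (le_max_right _ _), le_trans u2 (le_max_right _ _)⟩
      obtain ⟨n, hn1, hn2⟩ := Sinf hij (max N (F + 1))
      refine ⟨n, (hCiff l n).mpr ⟨hn2, fun m hm hsm => ?_⟩⟩
      obtain ⟨u1, u2⟩ := hFle m hm
      refine ⟨by omega, hN n (by omega) hn2 m hm, by omega⟩
    have hCcomp : Computable fun z : List ℕ × ℕ => C z.1 z.2 := by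
      rw [hCdef]
      refine Primrec.and.to_comp.comp ?_ ?_
      · exact (Primrec.nat_lt.comp ((primrec_sB j).comp Primrec.id)
          ((primrec_sB i).comp Primrec.id)).decide.to_comp.comp Computable.snd
      · refine computable_listAllB ?_
        rw [hp]
        refine Primrec.or.to_comp.comp (Primrec.not.to_comp.comp ?_) ?_
        · exact (Primrec.nat_lt.comp ((primrec_sB j).comp Primrec.id)
            ((primrec_sB i).comp Primrec.id)).decide.to_comp.comp Computable.fst
        · refine Primrec.and.to_comp.comp (Primrec.and.to_comp.comp ?_ ?_) ?_
          · exact (Primrec.nat_lt).decide.to_comp.comp Computable.fst Computable.snd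
          · exact Primrec.not.to_comp.comp ((Primrec.eq (α := ℕ)).decide.to_comp.comp
              ((computable_gG i j hf).comp Computable.snd) Computable.fst)
          · exact Primrec.not.to_comp.comp ((Primrec.eq (α := ℕ)).decide.to_comp.comp
              ((computable_gG i j hf).comp Computable.fst) Computable.snd)
    have hprot : ∀ l n m, C l n = true → m ∈ l → (∃ l', C l' m = true) →
        m < n ∧ gG i j f n ≠ m ∧ gG i j f m ≠ n := by
      intro l n m hCl hm hacc
      obtain ⟨l', hl'⟩ := hacc
      have hgm := ((hCiff l' m).mp hl').1
      exact ((hCiff l n).mp hCl).2 m hm hgm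
    have hbn : ∀ l n, C l n = true → gG i j f n ≠ n := by
      intro l n hCl
      exact (gG_spec hinj heq ((hCiff l n).mp hCl).1).1
    refine master hex hCcomp (computable_gG i j hf) hprot hbn μ hμ A hA ?_
    intro t
    exact (gG_spec hinj heq ((hCiff _ _).mp (C_seqL hex t)).1).2.symm

/-- If `A` is Martin-Löf random, then the many-one degree of `A` contains an
infinite antichain of 1-degrees. -/
theorem stmt_16 (μ : Measure (ℕ → Bool)) (hμ : IsFairCoin μ)
    (A : ℕ → Bool) (hA : MLRandom μ A) :
    ∃ B : ℕ → Set ℕ,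
      (∀ i, ManyOneEquiv (· ∈ B i) (fun n => A n = true)) ∧
      (∀ i j, i ≠ j → ¬ OneOneReducible (· ∈ B i) (· ∈ B j)) := by
  refine ⟨fun i => {m | A (blkB i m) = true}, ?_, ?_⟩
  · intro i
    constructor
    · exact ⟨blkB i, (primrec_blkB i).to_comp, fun m => Iff.rfl⟩
    · refine ⟨startB i, (primrec_startB i).to_comp, fun n => ?_⟩
      show A n = true ↔ A (blkB i (startB i n)) = true
      rw [blkB_startB]
  · intro i j hij hred
    obtain ⟨f, hf, hinj, hiff⟩ := hred
    have heq : ∀ m, A (blkB i m) = A (blkB j (f m)) := by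
      intro m
      have h := hiff m
      have h' : A (blkB i m) = true ↔ A (blkB j (f m)) = true := h
      cases h1 : A (blkB i m) <;> cases h2 : A (blkB j (f m)) <;> simp_all
    exact no_oneone μ hμ A hA hij hf hinj heq
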